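/- Let $(a_\nu^2)$ be positive reals indexed by a strictly increasing sequence $\nu_1 < \nu_2 < \cdots$ of positive reals with $\sum_\nu a_\nu^2 < \infty$. Then $\lim_{n\to\infty} \left[ \nu_1^n \sum_\nu a_\nu^2 \nu^{-n} - a_{\nu_1}^2 \right]^{1/n} = \nu_1/\nu_2$. -/

import Mathlib

open Filter

/-- After subtracting the leading term, the root test recovers the ratio of the
first two frequencies. -/
theorem stmt2 (ν a : ℕ → ℝ) (hν : StrictMono ν) (hνpos : ∀ i, 0 < ν i)
    (hapos : ∀ i, 0 < a i) (hsum : Summable a)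
    (hsummable : ∀ n : ℕ, 1 ≤ n → Summable fun i => a i / ν i ^ n) :
    Tendsto (fun n : ℕ => (ν 0 ^ n * (∑' i, a i / ν i ^ n) - a 0) ^ ((1 : ℝ) / n))
      atTop (nhds (ν 0 / ν 1)) := by
  have hν0 := hνpos 0
  have hν1 := hνpos 1
  set r : ℝ := ν 0 / ν 1 with hrdef
  have hr_pos : 0 < r := div_pos hν0 hν1
  have hr_lt : r < 1 := (div_lt_one hν1).2 (hν Nat.zero_lt_one)
  -- shifted sum
  have hsumshift : Summable (fun i => a (i + 1)) :=
    hsum.comp_injective (add_left_injective 1)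
  set C : ℝ := ∑' i, a (i + 1) with hCdef
  have hC1 : a 1 ≤ C := Summable.le_tsum hsumshift 0 (fun j _ => (hapos _).le)
  have hCpos : 0 < C := lt_of_lt_of_le (hapos 1) hC1
  -- summability of the weighted series
  have hf : ∀ n : ℕ, 1 ≤ n → Summable (fun i => a i * (ν 0 / ν i) ^ n) := by
    intro n hn
    refine ((hsummable n hn).mul_left (ν 0 ^ n)).congr ?_
    intro i
    have hi : (ν i) ^ n ≠ 0 := pow_ne_zero _ (hνpos i).ne'
    rw [div_pow]
    field_simp
  have hg : ∀ n : ℕ, 1 ≤ n → Summable (fun i => a (i + 1) * (ν 0 / ν (i + 1)) ^ n) :=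
    fun n hn => (hf n hn).comp_injective (add_left_injective 1)
  -- key identity
  have key : ∀ n : ℕ, 1 ≤ n →
      ν 0 ^ n * (∑' i, a i / ν i ^ n) - a 0
        = ∑' i, a (i + 1) * (ν 0 / ν (i + 1)) ^ n := by
    intro n hn
    have hfe : ∀ i, ν 0 ^ n * (a i / ν i ^ n) = a i * (ν 0 / ν i) ^ n := by
      intro i
      have hi : (ν i) ^ n ≠ 0 := pow_ne_zero _ (hνpos i).ne'
      rw [div_pow]
      field_simp
    calc ν 0 ^ n * (∑' i, a i / ν i ^ n) - a 0
        = (∑' i, a i * (ν 0 / ν i) ^ n) - a 0 := by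
          rw [← tsum_mul_left]
          congr 1
          exact tsum_congr hfe
      _ = (a 0 * (ν 0 / ν 0) ^ n + ∑' i, a (i + 1) * (ν 0 / ν (i + 1)) ^ n) - a 0 := by
          rw [Summable.tsum_eq_zero_add (hf n hn)]
      _ = ∑' i, a (i + 1) * (ν 0 / ν (i + 1)) ^ n := by
          rw [div_self hν0.ne', one_pow, mul_one]
          ring
  -- bounds on the tail sum
  have hlow : ∀ n : ℕ, 1 ≤ n →
      a 1 * r ^ n ≤ ∑' i, a (i + 1) * (ν 0 / ν (i + 1)) ^ n := by
    intro n hn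
    have := Summable.le_tsum (hg n hn) 0
      (fun j _ => mul_nonneg (hapos _).le (pow_nonneg (div_nonneg hν0.le (hνpos _).le) n))
    simpa using this
  have hup : ∀ n : ℕ, 1 ≤ n →
      (∑' i, a (i + 1) * (ν 0 / ν (i + 1)) ^ n) ≤ C * r ^ n := by
    intro n hn
    have hpt : ∀ i, a (i + 1) * (ν 0 / ν (i + 1)) ^ n ≤ a (i + 1) * r ^ n := by
      intro i
      refine mul_le_mul_of_nonneg_left ?_ (hapos _).le
      refine pow_le_pow_left₀ (div_nonneg hν0.le (hνpos _).le) ?_ n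
      exact div_le_div_of_nonneg_left hν0.le hν1 (hν.monotone (by omega))
    calc (∑' i, a (i + 1) * (ν 0 / ν (i + 1)) ^ n)
        ≤ ∑' i, a (i + 1) * r ^ n :=
          Summable.tsum_le_tsum hpt (hg n hn) (hsumshift.mul_right _)
      _ = C * r ^ n := by rw [tsum_mul_right]
  have hTpos : ∀ n : ℕ, 1 ≤ n →
      0 < ∑' i, a (i + 1) * (ν 0 / ν (i + 1)) ^ n := by
    intro n hn
    exact lt_of_lt_of_le (mul_pos (hapos 1) (pow_pos hr_pos n)) (hlow n hn)
  -- limits of the bounding sequences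
  have h0 : Tendsto (fun n : ℕ => (1 : ℝ) / n) atTop (nhds 0) :=
    tendsto_one_div_atTop_nhds_zero_nat
  have t1 : Tendsto (fun n : ℕ => a 1 ^ ((1 : ℝ) / n) * r) atTop (nhds r) := by
    have := (Filter.Tendsto.rpow (tendsto_const_nhds (α := ℕ) (x := a 1)) h0
      (Or.inl (hapos 1).ne')).mul_const r
    simpa using this
  have t2 : Tendsto (fun n : ℕ => C ^ ((1 : ℝ) / n) * r) atTop (nhds r) := by
    have := (Filter.Tendsto.rpow (tendsto_const_nhds (α := ℕ) (x := C)) h0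
      (Or.inl hCpos.ne')).mul_const r
    simpa using this
  -- rewriting (x * r^n)^(1/n)
  have hsplit : ∀ (x : ℝ), 0 < x → ∀ n : ℕ, 1 ≤ n →
      (x * r ^ n) ^ ((1 : ℝ) / n) = x ^ ((1 : ℝ) / n) * r := by
    intro x hx n hn
    have hn0 : (n : ℝ) ≠ 0 := Nat.cast_ne_zero.mpr (by omega)
    rw [Real.mul_rpow hx.le (by positivity), ← Real.rpow_natCast r n,
      ← Real.rpow_mul hr_pos.le, mul_one_div, div_self hn0, Real.rpow_one]
  -- squeeze
  refine tendsto_of_tendsto_of_tendsto_of_le_of_le' t1 t2 ?_ ?_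
  · filter_upwards [eventually_ge_atTop 1] with n hn
    rw [key n hn, ← hsplit (a 1) (hapos 1) n hn]
    exact Real.rpow_le_rpow (mul_pos (hapos 1) (pow_pos hr_pos n)).le (hlow n hn) (by positivity)
  · filter_upwards [eventually_ge_atTop 1] with n hn
    rw [key n hn, ← hsplit C hCpos n hn]
    exact Real.rpow_le_rpow (hTpos n hn).le (hup n hn) (by positivity)
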